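/- Let n ≥ 1, let λ_1, …, λ_n be pairwise distinct complex numbers and α_1, …, α_n be nonzero complex numbers, and set φ_j = Σ_{i=1}^n α_i λ_i^j. Then for every integer ν ≥ n, the ν×ν Hankel matrix ⁰₁H_ν with (k,l) entry φ_{k+l} has rank exactly n. -/
import Mathlib


/-- If the `λ i` are pairwise distinct and the `α i` are nonzero, then for
every `ν ≥ n` the `ν × ν` Hankel matrix `⁰₁H_ν` built from the samples
`φ j = ∑ i, α i * λ i ^ j` has rank exactly `n`. -/
theorem hankel_rank_eq_model_order
    (n : ℕ) (hn : 1 ≤ n) (lam α : Fin n → ℂ)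
    (hlam : Function.Injective lam) (hα : ∀ i, α i ≠ 0)
    (φ : ℕ → ℂ) (hφ : ∀ j : ℕ, φ j = ∑ i, α i * lam i ^ j)
    (ν : ℕ) (hν : n ≤ ν)
    (H : Matrix (Fin ν) (Fin ν) ℂ)
    (hH : ∀ k l : Fin ν, H k l = φ ((k : ℕ) + (l : ℕ))) :
    H.rank = n := by
  classical
  -- Factor `H = V * B` with `V : ν × n`, `B : n × ν`.
  set V : Matrix (Fin ν) (Fin n) ℂ := Matrix.of (fun k i => lam i ^ (k : ℕ)) with hV
  set B : Matrix (Fin n) (Fin ν) ℂ := Matrix.of (fun i l => α i * lam i ^ (l : ℕ)) with hB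
  have hfac : H = V * B := by
    ext k l
    rw [Matrix.mul_apply, hH, hφ]
    refine Finset.sum_congr rfl fun i _ => ?_
    simp [hV, hB, pow_add]
    ring
  -- Upper bound.
  have hub : H.rank ≤ n := by
    rw [hfac]
    calc (V * B).rank ≤ V.rank := Matrix.rank_mul_le_left V B
      _ ≤ Fintype.card (Fin n) := Matrix.rank_le_card_width V
      _ = n := Fintype.card_fin n
  -- The top-left `n × n` submatrix.
  set f : Fin n → Fin ν := Fin.castLE hν with hf
  set H' : Matrix (Fin n) (Fin n) ℂ := H.submatrix f f with hH'
  -- `H'` is a product of two invertible matrices.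
  have hdetV : (Matrix.vandermonde lam).det ≠ 0 :=
    Matrix.det_vandermonde_ne_zero_iff.mpr hlam
  have hfac' : H' = (Matrix.vandermonde lam).transpose * (Matrix.diagonal α * Matrix.vandermonde lam) := by
    ext k l
    rw [← Matrix.mul_assoc, Matrix.mul_apply]
    simp only [hH', Matrix.submatrix_apply, hH, hφ, hf]
    refine Finset.sum_congr rfl fun i _ => ?_
    simp [Matrix.mul_apply, Matrix.diagonal, Matrix.vandermonde, pow_add,
      Finset.sum_ite_eq, Finset.mem_univ]
    ring
  have hdetH' : H'.det ≠ 0 := by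
    rw [hfac', Matrix.det_mul, Matrix.det_mul, Matrix.det_transpose,
      Matrix.det_diagonal]
    exact mul_ne_zero hdetV (mul_ne_zero (Finset.prod_ne_zero_iff.mpr fun i _ => hα i) hdetV)
  have hrankH' : H'.rank = n := by
    rw [Matrix.rank_of_isUnit H' (Matrix.isUnit_iff_isUnit_det H' |>.mpr (isUnit_iff_ne_zero.mpr hdetH')),
      Fintype.card_fin]
  -- `H'` is obtained from `H` by multiplication with selection matrices.
  have hsub : H' = ((1 : Matrix (Fin ν) (Fin ν) ℂ).submatrix f (Equiv.refl (Fin ν))) * H *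
      ((1 : Matrix (Fin ν) (Fin ν) ℂ).submatrix (Equiv.refl (Fin ν)) f) := by
    rw [Matrix.one_submatrix_mul, Matrix.mul_submatrix_one]
    simp [hH']
  have hlb : n ≤ H.rank := by
    rw [← hrankH', hsub]
    calc (((1 : Matrix (Fin ν) (Fin ν) ℂ).submatrix f (Equiv.refl (Fin ν))) * H *
        ((1 : Matrix (Fin ν) (Fin ν) ℂ).submatrix (Equiv.refl (Fin ν)) f)).rank
        ≤ (((1 : Matrix (Fin ν) (Fin ν) ℂ).submatrix f (Equiv.refl (Fin ν))) * H).rank :=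
          Matrix.rank_mul_le_left _ _
      _ ≤ H.rank := Matrix.rank_mul_le_right _ _
  omega
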